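/- There exists a primal-feasible enumeration of C if and only if some enumeration τ of C ordered by nondecreasing deadlines, i.e., with D(τ 1) ≤ D(τ 2) ≤ … ≤ D(τ N), is primal-feasible. (Paper's Corollary after Theorem 5: the primal problem is feasible if and only if the schedule which sorts coflows in decreasing order of the weighted isolation rate R̃⁰_j — equivalently in nondecreasing order of the deadlines D_j = E / R̃⁰_j — is feasible.) -/

import Mathlib

section EDDaux

variable {L C : Type*} [Fintype L]

private lemma swap_lt {m : ℕ} (i : Fin m) {x y : Fin (m + 1)} (hxy : x < y)
    (hne : ¬(x = i.castSucc ∧ y = i.succ)) :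
    Equiv.swap i.castSucc i.succ x < Equiv.swap i.castSucc i.succ y := by
  simp only [Equiv.swap_apply_def]
  split_ifs <;>
    simp only [Fin.ext_iff, Fin.lt_def, Fin.val_succ, Fin.coe_castSucc, not_and] at * <;>
    omega

/-- Feasibility predicate. -/
private def EDDFeasible {m : ℕ} (p : L → C → ℝ) (D : C → ℝ) (σ : Fin m → C) : Prop :=
  ∀ k : Fin m, ∀ ℓ : L, 0 < p ℓ (σ k) → ∑ h ∈ Finset.Iic k, p ℓ (σ h) ≤ D (σ k)

open scoped Classical in
/-- Number of inversions of `D ∘ σ`. -/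
private noncomputable def EDDinv {m : ℕ} (D : C → ℝ) (σ : Fin m → C) : ℕ :=
  (Finset.univ.filter
    (fun q : Fin m × Fin m => q.1 < q.2 ∧ D (σ q.2) < D (σ q.1))).card

/-- Swapping an adjacent inverted pair strictly decreases the inversion count. -/
private lemma EDDinv_swap_lt {m : ℕ} (D : C → ℝ) (σ : Fin (m + 1) → C) (i : Fin m)
    (hinv : D (σ i.succ) < D (σ i.castSucc)) :
    EDDinv D (σ ∘ Equiv.swap i.castSucc i.succ) < EDDinv D σ := by
  classical
  set a := i.castSucc
  set b := i.succ
  set s := Equiv.swap a b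
  set T := Finset.univ.filter
    (fun q : Fin (m+1) × Fin (m+1) => q.1 < q.2 ∧ D (σ q.2) < D (σ q.1)) with hT
  set S := Finset.univ.filter
    (fun q : Fin (m+1) × Fin (m+1) => q.1 < q.2 ∧ D ((σ ∘ s) q.2) < D ((σ ∘ s) q.1)) with hS
  have hab : a < b := (Fin.castSucc_lt_succ : i.castSucc < i.succ)
  have hF : Function.Injective (fun q : Fin (m+1) × Fin (m+1) => (s q.1, s q.2)) := by
    intro q r h
    simp only [Prod.mk.injEq] at h
    exact Prod.ext (s.injective h.1) (s.injective h.2)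
  have hsub : S.image (fun q => (s q.1, s q.2)) ⊆ T := by
    intro q hq
    simp only [Finset.mem_image] at hq
    obtain ⟨r, hr, rfl⟩ := hq
    simp only [hS, Finset.mem_filter, Finset.mem_univ, true_and, Function.comp] at hr
    have hne : ¬(r.1 = a ∧ r.2 = b) := by
      rintro ⟨h1, h2⟩
      rw [h1, h2] at hr
      have := hr.2
      rw [Equiv.swap_apply_left, Equiv.swap_apply_right] at this
      exact absurd hinv (not_lt.2 this.le)
    simp only [hT, Finset.mem_filter, Finset.mem_univ, true_and]
    exact ⟨swap_lt i hr.1 hne, hr.2⟩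
  have hmem : (a, b) ∈ T := by
    simp only [hT, Finset.mem_filter, Finset.mem_univ, true_and]
    exact ⟨hab, hinv⟩
  have hnotmem : (a, b) ∉ S.image (fun q => (s q.1, s q.2)) := by
    intro h
    simp only [Finset.mem_image, Prod.mk.injEq] at h
    obtain ⟨r, hr, h1, h2⟩ := h
    have e1 : r.1 = b := by
      have := congrArg s h1; simpa [s, Equiv.swap_apply_left] using this
    have e2 : r.2 = a := by
      have := congrArg s h2; simpa [s, Equiv.swap_apply_right] using this
    simp only [hS, Finset.mem_filter, Finset.mem_univ, true_and] at hr
    rw [e1, e2] at hr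
    exact absurd (hr.1.trans hab) (lt_irrefl b)
  have hcard : S.card = (S.image (fun q => (s q.1, s q.2))).card :=
    (Finset.card_image_of_injective S hF).symm
  rw [EDDinv, EDDinv, ← hS, ← hT, hcard]
  exact Finset.card_lt_card (Finset.ssubset_iff_of_subset hsub |>.2 ⟨(a, b), hmem, hnotmem⟩)

/-- For `k ≠ castSucc i`, the interval `Iic k` is invariant under the adjacent swap. -/
private lemma swap_mem_Iic {m : ℕ} (i : Fin m) {k : Fin (m + 1)} (hk : k ≠ i.castSucc)
    (h : Fin (m + 1)) : h ∈ Finset.Iic k ↔ Equiv.swap i.castSucc i.succ h ∈ Finset.Iic k := by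
  have hk' : (k : ℕ) ≠ i := fun e => hk (Fin.ext (by simp [e]))
  by_cases hha : h = i.castSucc
  · subst hha
    rw [Equiv.swap_apply_left]
    simp only [Finset.mem_Iic, Fin.le_def, Fin.val_succ, Fin.coe_castSucc]
    omega
  · by_cases hhb : h = i.succ
    · subst hhb
      rw [Equiv.swap_apply_right]
      simp only [Finset.mem_Iic, Fin.le_def, Fin.val_succ, Fin.coe_castSucc]
      have hlt : (i.succ : Fin (m+1)).val ≤ m := (i.succ).isLt |> Nat.lt_succ_iff.mp
      omega
    · rw [Equiv.swap_apply_of_ne_of_ne hha hhb]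

/-- Swapping an adjacent inverted pair preserves feasibility. -/
private lemma EDDFeasible_swap {m : ℕ} (p : L → C → ℝ) (hp : ∀ ℓ j, 0 ≤ p ℓ j)
    (D : C → ℝ) (σ : Fin (m + 1) → C) (i : Fin m)
    (hinv : D (σ i.succ) < D (σ i.castSucc)) (hfeas : EDDFeasible p D σ) :
    EDDFeasible p D (σ ∘ Equiv.swap i.castSucc i.succ) := by
  classical
  set a := i.castSucc
  set b := i.succ
  set s := Equiv.swap a b
  have hab : a < b := (Fin.castSucc_lt_succ : i.castSucc < i.succ)
  -- sums over Iic k are unchanged when k ≠ a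
  have hsum : ∀ (k : Fin (m+1)), k ≠ a → ∀ ℓ,
      ∑ h ∈ Finset.Iic k, p ℓ (σ (s h)) = ∑ h ∈ Finset.Iic k, p ℓ (σ h) := by
    intro k hk ℓ
    exact Finset.sum_equiv s (fun h => swap_mem_Iic i hk h) (fun h _ => rfl)
  -- Iic b = insert b (Iic a)
  have hIic : Finset.Iic b = insert b (Finset.Iic a) := by
    ext h
    simp only [Finset.mem_Iic, Finset.mem_insert, Fin.le_def, Fin.ext_iff]
    have h1 : (b : ℕ) = (a : ℕ) + 1 := rfl
    omega
  intro k ℓ hpos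
  by_cases hka : k = a
  · -- position a now holds σ b
    subst hka
    have hsb : s a = b := Equiv.swap_apply_left a b
    simp only [Function.comp, hsb] at hpos ⊢
    have hsubset : (Finset.Iic a).image s ⊆ Finset.Iic b := by
      intro x hx
      simp only [Finset.mem_image] at hx
      obtain ⟨y, hy, rfl⟩ := hx
      simp only [Finset.mem_Iic] at hy ⊢
      by_cases hya : y = a
      · simp [hya, hsb]
      · by_cases hyb : y = b
        · exfalso
          rw [hyb] at hy; exact absurd (hy.trans_lt hab) (lt_irrefl b)
        · rw [Equiv.swap_apply_of_ne_of_ne hya hyb]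
          exact hy.trans hab.le
    calc ∑ h ∈ Finset.Iic a, p ℓ (σ (s h))
        = ∑ h ∈ (Finset.Iic a).image s, p ℓ (σ h) := by
          rw [Finset.sum_image (fun x _ y _ h => s.injective h)]
      _ ≤ ∑ h ∈ Finset.Iic b, p ℓ (σ h) :=
          Finset.sum_le_sum_of_subset_of_nonneg hsubset (fun x _ _ => hp ℓ (σ x))
      _ ≤ D (σ b) := hfeas b ℓ hpos
  · by_cases hkb : k = b
    · -- position b now holds σ a
      subst hkb
      have hsa : s b = a := Equiv.swap_apply_right a b
      simp only [Function.comp, hsa] at hpos ⊢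
      rw [hsum b (Ne.symm (ne_of_lt hab)) ℓ]
      rcases lt_or_eq_of_le (hp ℓ (σ b)) with hbpos | hbzero
      · exact (hfeas b ℓ hbpos).trans hinv.le
      · rw [hIic, Finset.sum_insert (by simp only [Finset.mem_Iic, not_le]; exact hab), ← hbzero, zero_add]
        exact hfeas a ℓ hpos
    · -- untouched positions
      have hs : s k = k := Equiv.swap_apply_of_ne_of_ne hka hkb
      simp only [Function.comp, hs] at hpos ⊢
      rw [hsum k hka ℓ]
      exact hfeas k ℓ hpos

/-- Main exchange induction: from any feasible bijection we get a sorted feasible one. -/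
private lemma exists_sorted {m : ℕ} (p : L → C → ℝ) (hp : ∀ ℓ j, 0 ≤ p ℓ j) (D : C → ℝ) :
    ∀ n : ℕ, ∀ σ : Fin (m + 1) → C, Function.Bijective σ → EDDFeasible p D σ →
      EDDinv D σ ≤ n →
      ∃ τ : Fin (m + 1) → C, Function.Bijective τ ∧ Monotone (D ∘ τ) ∧
        EDDFeasible p D τ := by
  classical
  intro n
  induction n with
  | zero =>
    intro σ hbij hfeas hinv
    refine ⟨σ, hbij, ?_, hfeas⟩
    intro x y hxy
    rcases eq_or_lt_of_le hxy with rfl | hlt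
    · exact le_rfl
    · by_contra hcon
      push_neg at hcon
      have : (x, y) ∈ Finset.univ.filter
          (fun q : Fin (m+1) × Fin (m+1) => q.1 < q.2 ∧ D (σ q.2) < D (σ q.1)) := by
        simp only [Finset.mem_filter, Finset.mem_univ, true_and]
        exact ⟨hlt, hcon⟩
      have hpos : 0 < EDDinv D σ := Finset.card_pos.2 ⟨(x, y), this⟩
      omega
  | succ n ih =>
    intro σ hbij hfeas hinv
    by_cases hmono : Monotone (D ∘ σ)
    · exact ⟨σ, hbij, hmono, hfeas⟩
    · rw [Fin.monotone_iff_le_succ] at hmono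
      push_neg at hmono
      obtain ⟨i, hi⟩ := hmono
      simp only [Function.comp] at hi
      refine ih (σ ∘ Equiv.swap i.castSucc i.succ)
        (hbij.comp (Equiv.swap i.castSucc i.succ).bijective)
        (EDDFeasible_swap p hp D σ i hi hfeas) ?_
      have := EDDinv_swap_lt D σ i hi
      omega

end EDDaux

/-- Paper's Corollary after Theorem 5: a primal-feasible enumeration of the
coflows exists if and only if some enumeration sorted in nondecreasing order of
the deadlines is primal-feasible. -/
theorem primal_feasible_iff_EDD_feasible
    {L C : Type*} [Fintype L] [Nonempty L] [Fintype C] [Nonempty C]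
    (N : ℕ) (hN : Fintype.card C = N)
    (p : L → C → ℝ) (hp : ∀ ℓ j, 0 ≤ p ℓ j)
    (D : C → ℝ) (hD : ∀ j, 0 < D j) :
    (∃ σ : Fin N → C, Function.Bijective σ ∧
        ∀ k : Fin N, ∀ ℓ : L, 0 < p ℓ (σ k) →
          ∑ h ∈ Finset.Iic k, p ℓ (σ h) ≤ D (σ k)) ↔
    (∃ τ : Fin N → C, Function.Bijective τ ∧
        (∀ i j : Fin N, i ≤ j → D (τ i) ≤ D (τ j)) ∧
        ∀ k : Fin N, ∀ ℓ : L, 0 < p ℓ (τ k) →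
          ∑ h ∈ Finset.Iic k, p ℓ (τ h) ≤ D (τ k)) := by
  constructor
  · rintro ⟨σ, hbij, hfeas⟩
    have hNpos : 0 < N := hN ▸ Fintype.card_pos
    obtain ⟨m, rfl⟩ := Nat.exists_eq_succ_of_ne_zero hNpos.ne'
    obtain ⟨τ, hτbij, hτmono, hτfeas⟩ :=
      exists_sorted p hp D (EDDinv D σ) σ hbij hfeas le_rfl
    exact ⟨τ, hτbij, fun i j hij => hτmono hij, hτfeas⟩
  · rintro ⟨τ, hbij, _, hfeas⟩
    exact ⟨τ, hbij, hfeas⟩
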